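/- The function J(a) = 2∫_1^∞ dv / (v·(v + √(v² + 4/a²))·√((v²−1)(v² + 4/a²))) tends to π/4 as a → ∞. -/

import Mathlib

open Real MeasureTheory Set Filter

private lemma image_inv_cos : (fun θ : ℝ => (Real.cos θ)⁻¹) '' Ioo 0 (π/2) = Ioi (1:ℝ) := by
  ext y
  constructor
  · rintro ⟨θ, ⟨h0, h1⟩, rfl⟩
    have hπ := Real.pi_pos
    have hc : 0 < Real.cos θ := Real.cos_pos_of_mem_Ioo ⟨by linarith, h1⟩
    have hlt : Real.cos θ < 1 := by
      have := Real.strictAntiOn_cos (left_mem_Icc.2 (by linarith))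
        ⟨h0.le, by linarith⟩ h0
      simpa using this
    simpa using (one_lt_inv_iff₀.2 ⟨hc, hlt⟩)
  · intro hy
    have hy1 : (1:ℝ) < y := hy
    have hy0 : 0 < y := lt_trans one_pos hy1
    refine ⟨Real.arccos y⁻¹, ⟨?_, ?_⟩, ?_⟩
    · exact Real.arccos_pos.2 (inv_lt_one_of_one_lt₀ hy1)
    · exact Real.arccos_lt_pi_div_two.2 (inv_pos.2 hy0)
    · simp only []; rw [Real.cos_arccos (by linarith [(inv_pos.2 hy0).le] : (-1:ℝ) ≤ y⁻¹) (le_of_lt (inv_lt_one_of_one_lt₀ hy1)), inv_inv]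

private lemma hasDeriv_inv_cos {θ : ℝ} (hc : Real.cos θ ≠ 0) :
    HasDerivAt (fun θ : ℝ => (Real.cos θ)⁻¹) (Real.sin θ / Real.cos θ ^ 2) θ := by
  have : HasDerivAt (fun θ : ℝ => (Real.cos θ)⁻¹) (-(-Real.sin θ) / Real.cos θ ^ 2) θ :=
    (Real.hasDerivAt_cos θ).inv hc
  rwa [neg_neg] at this

private lemma injOn_inv_cos : InjOn (fun θ : ℝ => (Real.cos θ)⁻¹) (Ioo 0 (π/2)) := by
  have hπ := Real.pi_pos
  intro x hx y hy hxy
  have hsub : Ioo 0 (π/2) ⊆ Icc 0 π := fun z hz => ⟨hz.1.le, by linarith [hz.2]⟩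
  exact Real.injOn_cos (hsub hx) (hsub hy) (inv_injective hxy)

private lemma eqon_transformed :
    ∀ θ ∈ Ioo 0 (π/2),
      |Real.sin θ / Real.cos θ ^ 2| •
        (2 * ((Real.cos θ)⁻¹) ^ 3 * Real.sqrt (((Real.cos θ)⁻¹) ^ 2 - 1))⁻¹
      = Real.cos θ ^ 2 / 2 := by
  intro θ ⟨h0, h1⟩
  have hπ := Real.pi_pos
  have hc : 0 < Real.cos θ := Real.cos_pos_of_mem_Ioo ⟨by linarith, h1⟩
  have hs : 0 < Real.sin θ := Real.sin_pos_of_pos_of_lt_pi h0 (by linarith)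
  have h1eq : ((Real.cos θ)⁻¹) ^ 2 - 1 = (Real.sin θ / Real.cos θ) ^ 2 := by
    have := Real.sin_sq_add_cos_sq θ
    field_simp
    nlinarith
  rw [h1eq, Real.sqrt_sq (by positivity), abs_of_pos (by positivity), smul_eq_mul]
  field_simp

private lemma bound_integral :
    ∫ v in Ioi (1:ℝ), (2 * v ^ 3 * Real.sqrt (v ^ 2 - 1))⁻¹ = π / 8 := by
  have hπ := Real.pi_pos
  have hderiv : ∀ θ ∈ Ioo 0 (π/2),
      HasDerivWithinAt (fun θ : ℝ => (Real.cos θ)⁻¹)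
        (Real.sin θ / Real.cos θ ^ 2) (Ioo 0 (π/2)) θ := by
    intro θ ⟨h0, h1⟩
    have hc : 0 < Real.cos θ := Real.cos_pos_of_mem_Ioo ⟨by linarith, h1⟩
    exact (hasDeriv_inv_cos hc.ne').hasDerivWithinAt
  rw [← image_inv_cos,
    integral_image_eq_integral_abs_deriv_smul measurableSet_Ioo hderiv injOn_inv_cos]
  rw [setIntegral_congr_fun measurableSet_Ioo eqon_transformed]
  rw [← integral_Ioc_eq_integral_Ioo, ← intervalIntegral.integral_of_le (by positivity)]
  have : ∫ θ in (0:ℝ)..(π/2), Real.cos θ ^ 2 / 2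
      = (∫ θ in (0:ℝ)..(π/2), Real.cos θ ^ 2) / 2 := by
    rw [intervalIntegral.integral_div]
  rw [this, integral_cos_sq]
  simp [Real.cos_pi_div_two, Real.sin_pi_div_two]
  ring

private lemma bound_integrable :
    IntegrableOn (fun v : ℝ => (2 * v ^ 3 * Real.sqrt (v ^ 2 - 1))⁻¹) (Ioi (1:ℝ)) := by
  have hπ := Real.pi_pos
  have hderiv : ∀ θ ∈ Ioo 0 (π/2),
      HasDerivWithinAt (fun θ : ℝ => (Real.cos θ)⁻¹)
        (Real.sin θ / Real.cos θ ^ 2) (Ioo 0 (π/2)) θ := by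
    intro θ ⟨h0, h1⟩
    have hc : 0 < Real.cos θ := Real.cos_pos_of_mem_Ioo ⟨by linarith, h1⟩
    exact (hasDeriv_inv_cos hc.ne').hasDerivWithinAt
  rw [← image_inv_cos,
    integrableOn_image_iff_integrableOn_abs_deriv_smul measurableSet_Ioo hderiv injOn_inv_cos]
  have : IntegrableOn (fun θ : ℝ => Real.cos θ ^ 2 / 2) (Ioo 0 (π/2)) :=
    ((Real.continuous_cos.pow 2).div_const 2).integrableOn_Icc.mono_set Ioo_subset_Icc_self
  exact this.congr_fun (fun θ hθ => (eqon_transformed θ hθ).symm) measurableSet_Ioo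

theorem stmt_15 :
    Tendsto
      (fun a : ℝ => 2 * ∫ v in Ioi (1 : ℝ),
        (v * (v + Real.sqrt (v ^ 2 + 4 / a ^ 2)) *
          Real.sqrt ((v ^ 2 - 1) * (v ^ 2 + 4 / a ^ 2)))⁻¹)
      atTop (nhds (Real.pi / 4)) := by
  have key : Tendsto
      (fun a : ℝ => ∫ v in Ioi (1 : ℝ),
        (v * (v + Real.sqrt (v ^ 2 + 4 / a ^ 2)) *
          Real.sqrt ((v ^ 2 - 1) * (v ^ 2 + 4 / a ^ 2)))⁻¹)
      atTop (nhds (∫ v in Ioi (1:ℝ), (2 * v ^ 3 * Real.sqrt (v ^ 2 - 1))⁻¹)) := by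
    apply tendsto_integral_filter_of_dominated_convergence
      (fun v : ℝ => (2 * v ^ 3 * Real.sqrt (v ^ 2 - 1))⁻¹)
    · -- measurability
      filter_upwards with a
      have hcont : Continuous fun v : ℝ =>
          v * (v + Real.sqrt (v ^ 2 + 4 / a ^ 2)) *
            Real.sqrt ((v ^ 2 - 1) * (v ^ 2 + 4 / a ^ 2)) := by
        fun_prop
      exact hcont.measurable.inv.aestronglyMeasurable
    · -- bound
      filter_upwards with a
      filter_upwards [ae_restrict_mem measurableSet_Ioi] with v hv
      have hv1 : (1:ℝ) < v := hv
      have hv0 : (0:ℝ) < v := lt_trans one_pos hv1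
      have hv21 : (0:ℝ) < v ^ 2 - 1 := by nlinarith
      have hcnn : (0:ℝ) ≤ 4 / a ^ 2 := by positivity
      have hle : 2 * v ^ 3 * Real.sqrt (v ^ 2 - 1) ≤
          v * (v + Real.sqrt (v ^ 2 + 4 / a ^ 2)) *
            Real.sqrt ((v ^ 2 - 1) * (v ^ 2 + 4 / a ^ 2)) := by
        have e1 : 2 * v ^ 3 * Real.sqrt (v ^ 2 - 1)
            = v * (v + v) * Real.sqrt ((v ^ 2 - 1) * v ^ 2) := by
          rw [Real.sqrt_mul hv21.le, Real.sqrt_sq hv0.le]; ring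
        have hsv : v ≤ Real.sqrt (v ^ 2 + 4 / a ^ 2) :=
          (Real.sqrt_sq hv0.le).symm.trans_le (Real.sqrt_le_sqrt (by linarith))
        rw [e1]
        gcongr <;> first
          | positivity
          | exact hsv
          | linarith
      have hpos : (0:ℝ) < 2 * v ^ 3 * Real.sqrt (v ^ 2 - 1) := by
        have := Real.sqrt_pos.2 hv21
        positivity
      rw [Real.norm_eq_abs, abs_of_nonneg (by positivity)]
      exact inv_anti₀ hpos hle
    · exact bound_integrable
    · -- pointwise limit
      filter_upwards [ae_restrict_mem measurableSet_Ioi] with v hv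
      have hv1 : (1:ℝ) < v := hv
      have hv0 : (0:ℝ) < v := lt_trans one_pos hv1
      have hv21 : (0:ℝ) < v ^ 2 - 1 := by nlinarith
      have h4 : Tendsto (fun a : ℝ => 4 / a ^ 2) atTop (nhds 0) :=
        tendsto_const_nhds.div_atTop (tendsto_pow_atTop two_ne_zero)
      have h1 : Tendsto (fun a : ℝ => v ^ 2 + 4 / a ^ 2) atTop (nhds (v ^ 2)) := by
        simpa using tendsto_const_nhds.add h4
      have hsqrt1 : Tendsto (fun a : ℝ => Real.sqrt (v ^ 2 + 4 / a ^ 2)) atTop (nhds v) := by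
        simpa [Real.sqrt_sq hv0.le] using h1.sqrt
      have hsqrt2 : Tendsto (fun a : ℝ => Real.sqrt ((v ^ 2 - 1) * (v ^ 2 + 4 / a ^ 2)))
          atTop (nhds (Real.sqrt (v ^ 2 - 1) * v)) := by
        have := ((tendsto_const_nhds (x := v ^ 2 - 1)).mul h1).sqrt
        rwa [Real.sqrt_mul hv21.le, Real.sqrt_sq hv0.le] at this
      have hden : Tendsto (fun a : ℝ =>
          v * (v + Real.sqrt (v ^ 2 + 4 / a ^ 2)) *
            Real.sqrt ((v ^ 2 - 1) * (v ^ 2 + 4 / a ^ 2)))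
          atTop (nhds (v * (v + v) * (Real.sqrt (v ^ 2 - 1) * v))) :=
        ((tendsto_const_nhds.mul (tendsto_const_nhds.add hsqrt1))).mul hsqrt2
      have hne : v * (v + v) * (Real.sqrt (v ^ 2 - 1) * v) ≠ 0 := by
        have := Real.sqrt_pos.2 hv21
        positivity
      have := hden.inv₀ hne
      convert this using 2
      ring
  have := key.const_mul (2:ℝ)
  rw [bound_integral] at this
  convert this using 2
  ring
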